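/- arXiv:2411.05678 — 2 statements merged into one kernel-verified Lean document; each statement's English description precedes it below -/
import Mathlib

section
/- Let (X, d) be a metric space and A ⊆ X nonempty closed. Every positive linear functional T : Lip(X, A) → ℝ is bounded with respect to the Lipschitz-constant norm, and its operator norm equals T(d_A). -/
/-- Every positive linear functional `T` on `Lip(X, A)` is bounded with respect
to the Lipschitz-constant norm, and its operator norm (the supremum of `|T f|`
over the unit ball) equals `T(d_A)`. -/
theorem stmt13 {X : Type*} [MetricSpace X] {A : Set X}
    (hA : IsClosed A) (hAne : A.Nonempty)
    (T : (X → ℝ) → ℝ)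
    (Tadd : ∀ f g : X → ℝ,
      (∃ K : NNReal, LipschitzWith K f) → (∀ a ∈ A, f a = 0) →
      (∃ K : NNReal, LipschitzWith K g) → (∀ a ∈ A, g a = 0) →
      T (f + g) = T f + T g)
    (Tsmul : ∀ (c : ℝ) (f : X → ℝ),
      (∃ K : NNReal, LipschitzWith K f) → (∀ a ∈ A, f a = 0) →
      T (c • f) = c * T f)
    (Tpos : ∀ f : X → ℝ,
      (∃ K : NNReal, LipschitzWith K f) → (∀ a ∈ A, f a = 0) →
      (∀ x, 0 ≤ f x) → 0 ≤ T f) :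
    IsLUB {r : ℝ | ∃ f : X → ℝ, LipschitzWith 1 f ∧ (∀ a ∈ A, f a = 0) ∧ r = |T f|}
      (T (fun x => Metric.infDist x A)) := by
  set dA : X → ℝ := fun x => Metric.infDist x A with hdA
  have hdLip : LipschitzWith 1 dA := Metric.lipschitz_infDist_pt A
  have hdZero : ∀ a ∈ A, dA a = 0 := fun a ha => Metric.infDist_zero_of_mem ha
  haveI : Nonempty A := hAne.to_subtype
  -- key bound: |f x| ≤ dA x for 1-Lipschitz f vanishing on A
  have key : ∀ f : X → ℝ, LipschitzWith 1 f → (∀ a ∈ A, f a = 0) →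
      ∀ x, |f x| ≤ dA x := by
    intro f hf hf0 x
    show |f x| ≤ Metric.infDist x A
    rw [Metric.infDist_eq_iInf]
    refine le_ciInf fun ⟨a, ha⟩ => ?_
    have := hf.dist_le_mul x a
    rw [Real.dist_eq, hf0 a ha, sub_zero] at this
    simpa using this
  -- T is monotone-ish: |T f| ≤ T dA for such f
  have ub : ∀ f : X → ℝ, LipschitzWith 1 f → (∀ a ∈ A, f a = 0) → |T f| ≤ T dA := by
    intro f hf hf0
    have hfL : ∃ K : NNReal, LipschitzWith K f := ⟨1, hf⟩
    have hdL : ∃ K : NNReal, LipschitzWith K dA := ⟨1, hdLip⟩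
    have hneg : ((-1 : ℝ) • f) = -f := neg_one_smul ℝ f
    have hnegLip : LipschitzWith 1 ((-1 : ℝ) • f) := by
      rw [hneg]; exact LipschitzWith.neg hf
    have hnegL : ∃ K : NNReal, LipschitzWith K ((-1 : ℝ) • f) := ⟨1, hnegLip⟩
    have hneg0 : ∀ a ∈ A, ((-1 : ℝ) • f) a = 0 := fun a ha => by simp [hf0 a ha]
    -- T (dA + f) ≥ 0 and T (dA - f) ≥ 0
    have h1 : 0 ≤ T (dA + f) := by
      refine Tpos _ ⟨1 + 1, hdLip.add hf⟩
        (fun a ha => by simp [hdZero a ha, hf0 a ha]) (fun x => ?_)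
      have := (abs_le.mp (key f hf hf0 x)).1
      simp only [Pi.add_apply]; linarith
    have h2 : 0 ≤ T (dA + (-1 : ℝ) • f) := by
      refine Tpos _ ⟨1 + 1, hdLip.add hnegLip⟩
        (fun a ha => by simp [hdZero a ha, hf0 a ha]) (fun x => ?_)
      have := (abs_le.mp (key f hf hf0 x)).2
      simp only [Pi.add_apply, Pi.smul_apply, smul_eq_mul]; linarith
    rw [Tadd dA f hdL hdZero hfL hf0] at h1
    rw [Tadd dA _ hdL hdZero hnegL hneg0, Tsmul (-1) f hfL hf0] at h2
    rw [abs_le]; constructor <;> linarith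
  have hmem : T dA ∈ {r : ℝ | ∃ f : X → ℝ, LipschitzWith 1 f ∧ (∀ a ∈ A, f a = 0) ∧ r = |T f|} := by
    refine ⟨dA, hdLip, hdZero, ?_⟩
    have : 0 ≤ T dA := Tpos dA ⟨1, hdLip⟩ hdZero (fun x => Metric.infDist_nonneg)
    rw [abs_of_nonneg this]
  constructor
  · rintro r ⟨f, hf, hf0, rfl⟩
    exact ub f hf hf0
  · intro b hb
    exact hb hmem
end

section
/- Let (X, d) be a complete separable metric space and A ⊆ X nonempty closed. For points x, y ∈ X, the relative 1-Wasserstein distance between the Dirac measures δ_x and δ_y equals d̄(x, y) = min(d(x, y), d_A(x) + d_A(y)). -/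
open MeasureTheory
open scoped ENNReal

/-- `d̄(x, y) = min(d(x, y), d_A(x) + d_A(y))`. -/
noncomputable def dbar {X : Type*} [MetricSpace X] (A : Set X) (x y : X) : ℝ :=
  min (dist x y) (Metric.infDist x A + Metric.infDist y A)

lemma measurable_dbar' {X : Type*} [MetricSpace X] [MeasurableSpace X] [BorelSpace X]
    [TopologicalSpace.SeparableSpace X]
    (A : Set X) : Measurable fun p : X × X => ENNReal.ofReal (dbar A p.1 p.2) := by
  haveI : SecondCountableTopology X := UniformSpace.secondCountable_of_separable X
  apply Measurable.ennreal_ofReal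
  apply Continuous.measurable
  exact continuous_dist.min (((Metric.continuous_infDist_pt A).comp continuous_fst).add
    ((Metric.continuous_infDist_pt A).comp continuous_snd))

lemma dbar_le_fst {X : Type*} [MetricSpace X] {A : Set X} {x : X} (hx : x ∈ A) (y : X) :
    dbar A x y ≤ Metric.infDist y A := by
  have := Metric.infDist_zero_of_mem hx
  calc dbar A x y ≤ Metric.infDist x A + Metric.infDist y A := min_le_right _ _
    _ = Metric.infDist y A := by rw [this, zero_add]

/-- The relative 1-Wasserstein distance between Dirac measures `δ_x` and `δ_y`
(the infimum over relative couplings `π` of `∫ d̄ dπ`) equals `d̄(x, y)`. -/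
theorem stmt19 {X : Type*} [MetricSpace X] [MeasurableSpace X] [BorelSpace X]
    [CompleteSpace X] [TopologicalSpace.SeparableSpace X]
    {A : Set X} (hA : IsClosed A) (hAne : A.Nonempty) (x y : X) :
    sInf {c : ℝ≥0∞ | ∃ π : Measure (X × X),
        (∀ E : Set X, MeasurableSet E → E ⊆ Aᶜ →
          π (Prod.fst ⁻¹' E) = Measure.dirac x E) ∧
        (∀ E : Set X, MeasurableSet E → E ⊆ Aᶜ →
          π (Prod.snd ⁻¹' E) = Measure.dirac y E) ∧
        c = ∫⁻ p, ENNReal.ofReal (dbar A p.1 p.2) ∂π} =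
      ENNReal.ofReal (dbar A x y) := by
  apply le_antisymm
  · -- upper bound: the coupling `δ_(x,y)`
    apply sInf_le
    refine ⟨Measure.dirac (x, y), ?_, ?_, ?_⟩
    · intro E hE _
      rw [← Measure.map_apply measurable_fst hE, Measure.map_dirac' measurable_fst]
    · intro E hE _
      rw [← Measure.map_apply measurable_snd hE, Measure.map_dirac' measurable_snd]
    · exact (lintegral_dirac' (x, y) (measurable_dbar' A)).symm
  · -- lower bound
    refine le_sInf ?_
    rintro c ⟨π, h1, h2, rfl⟩
    by_cases hx : x ∈ A
    · by_cases hy : y ∈ A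
      · -- both in A : dbar = 0
        have h0 : dbar A x y ≤ 0 := by
          simpa [Metric.infDist_zero_of_mem hy] using dbar_le_fst hx y
        simp [ENNReal.ofReal_eq_zero.2 h0]
      · -- x ∈ A, y ∉ A : use S = A ×ˢ {y}
        set S : Set (X × X) := A ×ˢ {y} with hSdef
        have hS : MeasurableSet S := hA.measurableSet.prod (measurableSet_singleton y)
        have hπy : π (Prod.snd ⁻¹' {y}) = 1 := by
          rw [h2 {y} (measurableSet_singleton y) (by simpa using hy)]
          simp [Measure.dirac_apply' _ (measurableSet_singleton y)]
        have hπAc : π (Prod.fst ⁻¹' Aᶜ) = 0 := by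
          rw [h1 Aᶜ hA.measurableSet.compl le_rfl]
          simp [Measure.dirac_apply' _ hA.measurableSet.compl, hx]
        have hsub : Prod.snd ⁻¹' {y} ⊆ S ∪ Prod.fst ⁻¹' Aᶜ := by
          rintro p (hp : p.2 = y)
          by_cases h : p.1 ∈ A
          · exact Or.inl ⟨h, hp⟩
          · exact Or.inr h
        have hπS : 1 ≤ π S := by
          calc (1 : ℝ≥0∞) = π (Prod.snd ⁻¹' {y}) := hπy.symm
            _ ≤ π (S ∪ Prod.fst ⁻¹' Aᶜ) := measure_mono hsub
            _ ≤ π S + π (Prod.fst ⁻¹' Aᶜ) := measure_union_le _ _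
            _ = π S := by rw [hπAc, add_zero]
        have hpoint : ∀ p, S.indicator (fun _ => ENNReal.ofReal (Metric.infDist y A)) p
            ≤ ENNReal.ofReal (dbar A p.1 p.2) := by
          intro p
          by_cases hp : p ∈ S
          · rw [Set.indicator_of_mem hp]
            obtain ⟨hp1, hp2⟩ := hp
            apply ENNReal.ofReal_le_ofReal
            simp only [Set.mem_singleton_iff] at hp2
            subst hp2
            refine le_min ?_ ?_
            · rw [dist_comm]; exact Metric.infDist_le_dist_of_mem hp1
            · rw [Metric.infDist_zero_of_mem hp1, zero_add]
          · rw [Set.indicator_of_notMem hp]; exact zero_le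
        calc ENNReal.ofReal (dbar A x y) ≤ ENNReal.ofReal (Metric.infDist y A) :=
              ENNReal.ofReal_le_ofReal (dbar_le_fst hx y)
          _ ≤ ENNReal.ofReal (Metric.infDist y A) * π S := le_mul_of_one_le_right zero_le hπS
          _ = ∫⁻ p, S.indicator (fun _ => ENNReal.ofReal (Metric.infDist y A)) p ∂π := by
              rw [lintegral_indicator_const hS]
          _ ≤ _ := lintegral_mono hpoint
    · by_cases hy : y ∈ A
      · -- x ∉ A, y ∈ A : symmetric
        set S : Set (X × X) := {x} ×ˢ A with hSdef
        have hS : MeasurableSet S := (measurableSet_singleton x).prod hA.measurableSet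
        have hπx : π (Prod.fst ⁻¹' {x}) = 1 := by
          rw [h1 {x} (measurableSet_singleton x) (by simpa using hx)]
          simp [Measure.dirac_apply' _ (measurableSet_singleton x)]
        have hπAc : π (Prod.snd ⁻¹' Aᶜ) = 0 := by
          rw [h2 Aᶜ hA.measurableSet.compl le_rfl]
          simp [Measure.dirac_apply' _ hA.measurableSet.compl, hy]
        have hsub : Prod.fst ⁻¹' {x} ⊆ S ∪ Prod.snd ⁻¹' Aᶜ := by
          rintro p (hp : p.1 = x)
          by_cases h : p.2 ∈ A
          · exact Or.inl ⟨hp, h⟩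
          · exact Or.inr h
        have hπS : 1 ≤ π S := by
          calc (1 : ℝ≥0∞) = π (Prod.fst ⁻¹' {x}) := hπx.symm
            _ ≤ π (S ∪ Prod.snd ⁻¹' Aᶜ) := measure_mono hsub
            _ ≤ π S + π (Prod.snd ⁻¹' Aᶜ) := measure_union_le _ _
            _ = π S := by rw [hπAc, add_zero]
        have hxd : dbar A x y ≤ Metric.infDist x A := by
          calc dbar A x y ≤ Metric.infDist x A + Metric.infDist y A := min_le_right _ _
            _ = Metric.infDist x A := by rw [Metric.infDist_zero_of_mem hy, add_zero]
        have hpoint : ∀ p, S.indicator (fun _ => ENNReal.ofReal (Metric.infDist x A)) p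
            ≤ ENNReal.ofReal (dbar A p.1 p.2) := by
          intro p
          by_cases hp : p ∈ S
          · rw [Set.indicator_of_mem hp]
            obtain ⟨hp1, hp2⟩ := hp
            apply ENNReal.ofReal_le_ofReal
            simp only [Set.mem_singleton_iff] at hp1
            subst hp1
            refine le_min (Metric.infDist_le_dist_of_mem hp2) ?_
            rw [Metric.infDist_zero_of_mem hp2, add_zero]
          · rw [Set.indicator_of_notMem hp]; exact zero_le
        calc ENNReal.ofReal (dbar A x y) ≤ ENNReal.ofReal (Metric.infDist x A) :=
              ENNReal.ofReal_le_ofReal hxd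
          _ ≤ ENNReal.ofReal (Metric.infDist x A) * π S := le_mul_of_one_le_right zero_le hπS
          _ = ∫⁻ p, S.indicator (fun _ => ENNReal.ofReal (Metric.infDist x A)) p ∂π := by
              rw [lintegral_indicator_const hS]
          _ ≤ _ := lintegral_mono hpoint
      · -- x ∉ A, y ∉ A : three regions
        set u := ENNReal.ofReal (Metric.infDist x A) with hu
        set v := ENNReal.ofReal (Metric.infDist y A) with hv
        set w := ENNReal.ofReal (dbar A x y) with hw
        set S1 : Set (X × X) := {x} ×ˢ A with hS1def
        set S2 : Set (X × X) := A ×ˢ {y} with hS2def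
        set S3 : Set (X × X) := {x} ×ˢ {y} with hS3def
        have hS1 : MeasurableSet S1 := (measurableSet_singleton x).prod hA.measurableSet
        have hS2 : MeasurableSet S2 := hA.measurableSet.prod (measurableSet_singleton y)
        have hS3 : MeasurableSet S3 := (measurableSet_singleton x).prod (measurableSet_singleton y)
        have hπx : π (Prod.fst ⁻¹' {x}) = 1 := by
          rw [h1 {x} (measurableSet_singleton x) (by simpa using hx)]
          simp [Measure.dirac_apply' _ (measurableSet_singleton x)]
        have hπy : π (Prod.snd ⁻¹' {y}) = 1 := by
          rw [h2 {y} (measurableSet_singleton y) (by simpa using hy)]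
          simp [Measure.dirac_apply' _ (measurableSet_singleton y)]
        have hπx0 : π (Prod.fst ⁻¹' (Aᶜ \ {x})) = 0 := by
          rw [h1 _ (hA.measurableSet.compl.diff (measurableSet_singleton x)) Set.diff_subset]
          rw [Measure.dirac_apply' _ (hA.measurableSet.compl.diff (measurableSet_singleton x))]
          simp
        have hπy0 : π (Prod.snd ⁻¹' (Aᶜ \ {y})) = 0 := by
          rw [h2 _ (hA.measurableSet.compl.diff (measurableSet_singleton y)) Set.diff_subset]
          rw [Measure.dirac_apply' _ (hA.measurableSet.compl.diff (measurableSet_singleton y))]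
          simp
        -- measure inequalities
        have hat : 1 ≤ π S1 + π S3 := by
          have hsub : Prod.fst ⁻¹' {x} ⊆ (S1 ∪ S3) ∪ Prod.snd ⁻¹' (Aᶜ \ {y}) := by
            rintro p (hp : p.1 = x)
            by_cases h : p.2 ∈ A
            · exact Or.inl (Or.inl ⟨hp, h⟩)
            · by_cases h' : p.2 = y
              · exact Or.inl (Or.inr ⟨hp, h'⟩)
              · exact Or.inr ⟨h, h'⟩
          calc (1 : ℝ≥0∞) = π (Prod.fst ⁻¹' {x}) := hπx.symm
            _ ≤ π ((S1 ∪ S3) ∪ Prod.snd ⁻¹' (Aᶜ \ {y})) := measure_mono hsub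
            _ ≤ π (S1 ∪ S3) + π (Prod.snd ⁻¹' (Aᶜ \ {y})) := measure_union_le _ _
            _ = π (S1 ∪ S3) := by rw [hπy0, add_zero]
            _ ≤ π S1 + π S3 := measure_union_le _ _
        have hbt : 1 ≤ π S2 + π S3 := by
          have hsub : Prod.snd ⁻¹' {y} ⊆ (S2 ∪ S3) ∪ Prod.fst ⁻¹' (Aᶜ \ {x}) := by
            rintro p (hp : p.2 = y)
            by_cases h : p.1 ∈ A
            · exact Or.inl (Or.inl ⟨h, hp⟩)
            · by_cases h' : p.1 = x
              · exact Or.inl (Or.inr ⟨h', hp⟩)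
              · exact Or.inr ⟨h, h'⟩
          calc (1 : ℝ≥0∞) = π (Prod.snd ⁻¹' {y}) := hπy.symm
            _ ≤ π ((S2 ∪ S3) ∪ Prod.fst ⁻¹' (Aᶜ \ {x})) := measure_mono hsub
            _ ≤ π (S2 ∪ S3) + π (Prod.fst ⁻¹' (Aᶜ \ {x})) := measure_union_le _ _
            _ = π (S2 ∪ S3) := by rw [hπx0, add_zero]
            _ ≤ π S2 + π S3 := measure_union_le _ _
        have ht1 : π S3 ≤ 1 := by
          rw [← hπx]
          exact measure_mono (fun p hp => hp.1)
        have huvw : w ≤ u + v := by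
          rw [hw, hu, hv, ← ENNReal.ofReal_add Metric.infDist_nonneg Metric.infDist_nonneg]
          exact ENNReal.ofReal_le_ofReal (min_le_right _ _)
        -- pointwise bound
        have hpoint : ∀ p, S1.indicator (fun _ => u) p + S2.indicator (fun _ => v) p
            + S3.indicator (fun _ => w) p ≤ ENNReal.ofReal (dbar A p.1 p.2) := by
          intro p
          by_cases hp1 : p ∈ S1
          · obtain ⟨hpx, hpA⟩ := Set.mem_prod.1 hp1
            simp only [Set.mem_singleton_iff] at hpx
            have hp2 : p ∉ S2 := fun h => hx (hpx ▸ (Set.mem_prod.1 h).1)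
            have hp3 : p ∉ S3 := fun h => hy ((Set.mem_prod.1 h).2 ▸ hpA)
            rw [Set.indicator_of_mem hp1, Set.indicator_of_notMem hp2,
              Set.indicator_of_notMem hp3, add_zero, add_zero, hu]
            apply ENNReal.ofReal_le_ofReal
            rw [hpx]
            refine le_min (Metric.infDist_le_dist_of_mem hpA) ?_
            rw [Metric.infDist_zero_of_mem hpA, add_zero]
          · by_cases hp2 : p ∈ S2
            · obtain ⟨hpA, hpy⟩ := Set.mem_prod.1 hp2
              simp only [Set.mem_singleton_iff] at hpy
              have hp3 : p ∉ S3 := fun h => hx ((Set.mem_prod.1 h).1 ▸ hpA)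
              rw [Set.indicator_of_notMem hp1, Set.indicator_of_mem hp2,
                Set.indicator_of_notMem hp3, zero_add, add_zero, hv]
              apply ENNReal.ofReal_le_ofReal
              rw [hpy]
              refine le_min ?_ ?_
              · rw [dist_comm]; exact Metric.infDist_le_dist_of_mem hpA
              · rw [Metric.infDist_zero_of_mem hpA, zero_add]
            · by_cases hp3 : p ∈ S3
              · obtain ⟨hpx, hpy⟩ := Set.mem_prod.1 hp3
                simp only [Set.mem_singleton_iff] at hpx hpy
                rw [Set.indicator_of_notMem hp1, Set.indicator_of_notMem hp2,
                  Set.indicator_of_mem hp3, zero_add, zero_add, hw, hpx, hpy]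
              · rw [Set.indicator_of_notMem hp1, Set.indicator_of_notMem hp2,
                  Set.indicator_of_notMem hp3]
                simp
        have hint : u * π S1 + v * π S2 + w * π S3 ≤ ∫⁻ p, ENNReal.ofReal (dbar A p.1 p.2) ∂π := by
          calc u * π S1 + v * π S2 + w * π S3
              = ∫⁻ p, S1.indicator (fun _ => u) p + S2.indicator (fun _ => v) p
                  + S3.indicator (fun _ => w) p ∂π := by
                rw [lintegral_add_left ((measurable_const.indicator hS1).fun_add
                    (measurable_const.indicator hS2)),
                  lintegral_add_left (measurable_const.indicator hS1),
                  lintegral_indicator_const hS1, lintegral_indicator_const hS2,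
                  lintegral_indicator_const hS3]
            _ ≤ _ := lintegral_mono hpoint
        refine le_trans ?_ hint
        -- arithmetic in ℝ≥0∞
        set a := π S1; set b := π S2; set t := π S3
        calc w = w * ((1 - t) + t) := by rw [tsub_add_cancel_of_le ht1, mul_one]
          _ = w * (1 - t) + w * t := by rw [mul_add]
          _ ≤ (u + v) * (1 - t) + w * t := by gcongr
          _ = u * (1 - t) + v * (1 - t) + w * t := by ring
          _ ≤ u * a + v * b + w * t := by
              gcongr
              · exact tsub_le_iff_right.2 hat
              · exact tsub_le_iff_right.2 hbt
end
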